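/- arXiv:1506.02727 — 2 statements merged into one kernel-verified Lean document; each statement's English description precedes it below -/
import Mathlib

section
/- Let (H,d) be a δ-hyperbolic metric space with 5εδ ≤ 1, fix a basepoint x ∈ H, and define ρ_ε on the Gromov completion H̄ by ρ_ε(ξ,η) = inf Σ_{i=1}^{n-1} exp(−ε(ξ_i|ξ_{i+1})_x) over chains ξ = ξ_1, …, ξ_n = η in H̄ (and ρ_ε(ξ,ξ) = 0). Then ρ_ε is a metric on H̄. -/
open Filter Topology

noncomputable section

/-- The Gromov product `(x|y)_z`. -/
def gromovProd {H : Type*} [MetricSpace H] (x y z : H) : ℝ :=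
  (dist x z + dist y z - dist x y) / 2

/-- A Gromov sequence (a sequence converging to infinity). -/
def IsGromovSeq {H : Type*} [MetricSpace H] (s : ℕ → H) : Prop :=
  ∀ (w : H) (M : ℝ), ∃ N, ∀ i ≥ N, ∀ j ≥ N, M ≤ gromovProd (s i) (s j) w

/-- Equivalence of Gromov sequences. -/
def GromovSeqEquiv {H : Type*} [MetricSpace H] (s t : ℕ → H) : Prop :=
  ∀ (w : H) (M : ℝ), ∃ N, ∀ i ≥ N, ∀ j ≥ N, M ≤ gromovProd (s i) (t j) w

/-- An abstract model of the Gromov completion `H̄ = H ∪ ∂H` of a hyperbolic space `H`: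
a Hausdorff topological space into which `H` embeds densely so that the points outside
`H` (the boundary) are exactly the limits of Gromov sequences, two Gromov sequences
having the same limit iff they are equivalent. -/
structure GromovCompletion (H : Type*) [MetricSpace H] where
  Hb : Type*
  [top : TopologicalSpace Hb]
  [t2 : T2Space Hb]
  ι : H → Hb
  inj : Function.Injective ι
  cont : Continuous ι
  dense : DenseRange ι
  gromovSeq_tendsto : ∀ s : ℕ → H, IsGromovSeq s →
    ∃ ξ, ξ ∉ Set.range ι ∧ Tendsto (fun n => ι (s n)) atTop (nhds ξ)
  tendsto_gromovSeq : ∀ (s : ℕ → H) (ξ : Hb), ξ ∉ Set.range ι →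
    Tendsto (fun n => ι (s n)) atTop (nhds ξ) → IsGromovSeq s
  exists_seq : ∀ ξ : Hb, ξ ∉ Set.range ι →
    ∃ s : ℕ → H, Tendsto (fun n => ι (s n)) atTop (nhds ξ)
  same_limit_iff : ∀ (s t : ℕ → H) (ξ ζ : Hb), ξ ∉ Set.range ι → ζ ∉ Set.range ι →
    Tendsto (fun n => ι (s n)) atTop (nhds ξ) → Tendsto (fun n => ι (t n)) atTop (nhds ζ) →
    (GromovSeqEquiv s t ↔ ξ = ζ)

attribute [instance] GromovCompletion.top GromovCompletion.t2

variable {H : Type*} [MetricSpace H]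

/-- The Gromov boundary `∂H` in a completion model. -/
def GromovCompletion.boundary (C : GromovCompletion H) : Set C.Hb :=
  (Set.range C.ι)ᶜ

/-- `γ` restricted to the interval `I` is a geodesic arc in the completion with
endpoints `ξ` and `η` (which may lie on the boundary). -/
def IsGeodArc (C : GromovCompletion H) (γ : ℝ → H) (I : Set ℝ) (ξ η : C.Hb) : Prop :=
  I.Nonempty ∧ I.OrdConnected ∧
  (∀ s ∈ I, ∀ t ∈ I, dist (γ s) (γ t) = |s - t|) ∧
  (BddBelow I → ∃ a, IsLeast I a ∧ C.ι (γ a) = ξ) ∧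
  (¬ BddBelow I → Tendsto (fun t => C.ι (γ t)) atBot (nhds ξ)) ∧
  (BddAbove I → ∃ b, IsGreatest I b ∧ C.ι (γ b) = η) ∧
  (¬ BddAbove I → Tendsto (fun t => C.ι (γ t)) atTop (nhds η))

/-- `H` is a geodesic space: any two points are joined by a geodesic arc. -/
def GeodSpace (C : GromovCompletion H) : Prop :=
  ∀ x y : H, ∃ (γ : ℝ → H) (I : Set ℝ), IsGeodArc C γ I (C.ι x) (C.ι y)

/-- `Y ⊆ H̄` is `c`-quasi-convex: every geodesic arc between points of `Y` stays within
distance `c` of `Y`. -/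
def QuasiConvexWith (C : GromovCompletion H) (c : ℝ) (Y : Set C.Hb) : Prop :=
  ∀ (γ : ℝ → H) (I : Set ℝ) (ξ η : C.Hb), ξ ∈ Y → η ∈ Y → IsGeodArc C γ I ξ η →
    ∀ t ∈ I, ∃ z : H, C.ι z ∈ Y ∧ dist (γ t) z ≤ c

/-- The closed convex hull of `K ⊆ H̄`: the closure of the union of `K` and of all
geodesic arcs with both endpoints in `K`. -/
def GromovHull (C : GromovCompletion H) (K : Set C.Hb) : Set C.Hb :=
  closure (K ∪ {p | ∃ (γ : ℝ → H) (I : Set ℝ) (ξ η : C.Hb), ξ ∈ K ∧ η ∈ K ∧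
    IsGeodArc C γ I ξ η ∧ ∃ t ∈ I, p = C.ι (γ t)})

end

noncomputable section

open scoped Classical

variable {H : Type*} [MetricSpace H]

/-- The Gromov product of two points of the completion with respect to a basepoint
`z ∈ H`, defined as the infimum over sequences converging to the two points of the
liminf of the Gromov products. -/
def gromovProdExt (C : GromovCompletion H) (z : H) (ξ η : C.Hb) : ℝ :=
  sInf {r | ∃ s t : ℕ → H,
    Tendsto (fun n => C.ι (s n)) atTop (nhds ξ) ∧
    Tendsto (fun n => C.ι (t n)) atTop (nhds η) ∧
    r = Filter.liminf (fun p : ℕ × ℕ => gromovProd (s p.1) (t p.2) z) (atTop ×ˢ atTop)}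

/-- The visual quasi-metric `ρ_ε` on the Gromov completion: the chain infimum of
`exp(−ε (ξ_i | ξ_{i+1})_x)`. -/
def rhoVisual (C : GromovCompletion H) (ε : ℝ) (x : H) (ξ η : C.Hb) : ℝ :=
  if ξ = η then 0
  else sInf {r | ∃ (n : ℕ) (c : Fin (n + 2) → C.Hb), c 0 = ξ ∧ c (Fin.last (n + 1)) = η ∧
    r = ∑ i : Fin (n + 1),
      Real.exp (-(ε * gromovProdExt C x (c i.castSucc) (c i.succ)))}

end


section AuxChain

private lemma arith1 (K A S r : ℝ) (hK1 : 1 ≤ K) (hK2 : K ≤ 5/4) (hS : 0 < S) (hA : 0 < A)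
    (key : r ≤ K * A) (hAb : A ≤ S) : (3-2*K)*r ≤ S := by
  nlinarith [mul_le_mul_of_nonneg_left key (by linarith : (0:ℝ) ≤ 3-2*K),
    mul_le_mul_of_nonneg_left hAb (by nlinarith : (0:ℝ) ≤ (3-2*K)*K),
    mul_nonneg (by linarith : (0:ℝ) ≤ 2*K-1) (by linarith : (0:ℝ) ≤ K-1), hS]

private lemma arith2 (K A S r : ℝ) (hK1 : 1 ≤ K) (hK2 : K ≤ 5/4) (hS : 0 < S) (hA : 0 < A)
    (key : r ≤ K * A) (hAb : (3-2*K)*A ≤ S/2) : (3-2*K)*r ≤ S := by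
  nlinarith [mul_le_mul_of_nonneg_left key (by linarith : (0:ℝ) ≤ 3-2*K),
    mul_le_mul_of_nonneg_left hAb (by linarith : (0:ℝ) ≤ K), hS]

private lemma arith3 (K A S r : ℝ) (hK1 : 1 ≤ K) (hK2 : K ≤ 5/4) (hS : 0 < S) (hA : 0 < A)
    (key : r ≤ K * (K * A)) (hAb : A ≤ S) : (3-2*K)*r ≤ S := by
  nlinarith [mul_le_mul_of_nonneg_left key (by linarith : (0:ℝ) ≤ 3-2*K),
    mul_le_mul_of_nonneg_right (by nlinarith [sq_nonneg (K-1)] : (3-2*K)*(K*K) ≤ 1) hA.le, hS]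

private lemma arith4 (K A S r : ℝ) (hK1 : 1 ≤ K) (hK2 : K ≤ 5/4) (hS : 0 < S) (hA : 0 < A)
    (key : r ≤ K * (K * A)) (hAb : (3-2*K)*A ≤ S/2) : (3-2*K)*r ≤ S := by
  nlinarith [mul_le_mul_of_nonneg_left key (by linarith : (0:ℝ) ≤ 3-2*K),
    mul_le_mul_of_nonneg_left hAb (by nlinarith : (0:ℝ) ≤ K*K),
    mul_le_mul_of_nonneg_right (by nlinarith : K*K ≤ 2) (by linarith : (0:ℝ) ≤ S/2)]

open Finset in
private lemma chain_lower {X : Type*} (ρ : X → X → ℝ) (K : ℝ) (hK1 : 1 ≤ K) (hK2 : K ≤ 5/4)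
    (hpos : ∀ a b, 0 < ρ a b) (hult : ∀ a b w, ρ a w ≤ K * max (ρ a b) (ρ b w)) :
    ∀ n : ℕ, ∀ c : ℕ → X, 1 ≤ n →
      (3 - 2*K) * ρ (c 0) (c n) ≤ ∑ i ∈ Finset.range n, ρ (c i) (c (i+1)) := by
  intro n
  induction n using Nat.strong_induction_on with
  | _ n IH =>
  intro c hn
  set S := ∑ i ∈ Finset.range n, ρ (c i) (c (i+1)) with hSdef
  have h30 : (0:ℝ) < 3 - 2*K := by linarith
  have hSpos : 0 < S := Finset.sum_pos (fun i _ => hpos _ _) ⟨0, Finset.mem_range.mpr hn⟩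
  have hc0 : (0:ℝ) ≤ K := by linarith
  rcases eq_or_lt_of_le hn with h1 | h2
  · rw [← h1] at hSdef ⊢
    have hS1 : S = ρ (c 0) (c 1) := by rw [hSdef]; simp
    nlinarith [hpos (c 0) (c 1)]
  · classical
    set P : Finset ℕ := (Finset.range (n+1)).filter
      (fun m => ∑ i ∈ Finset.range m, ρ (c i) (c (i+1)) ≤ S/2) with hP
    have h0P : 0 ∈ P := by
      simp only [hP, mem_filter, mem_range]
      exact ⟨by omega, by simp; linarith⟩
    obtain ⟨p, hpmem, hpmax⟩ : ∃ p ∈ P, ∀ q ∈ P, q ≤ p :=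
      ⟨P.max' ⟨0, h0P⟩, P.max'_mem _, fun q hq => P.le_max' q hq⟩
    have hpn1 : p < n + 1 := mem_range.mp (Finset.mem_filter.mp hpmem).1
    have hple : ∑ i ∈ Finset.range p, ρ (c i) (c (i+1)) ≤ S/2 :=
      (Finset.mem_filter.mp hpmem).2
    have hpn : p < n := by
      rcases Nat.lt_or_ge p n with h | h
      · exact h
      · exfalso
        have hh : p = n := by omega
        rw [hh, ← hSdef] at hple; linarith
    have hp1gt : S/2 < ∑ i ∈ Finset.range (p+1), ρ (c i) (c (i+1)) := by
      by_contra h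
      push_neg at h
      have hmem : p + 1 ∈ P := by
        simp only [hP, mem_filter, mem_range]
        exact ⟨by omega, h⟩
      have := hpmax _ hmem
      omega
    have hsplit : ∑ i ∈ Finset.range (p+1), ρ (c i) (c (i+1))
        + ∑ i ∈ Finset.Ico (p+1) n, ρ (c i) (c (i+1)) = S := by
      rw [hSdef]
      simp only [Finset.range_eq_Ico]
      exact Finset.sum_Ico_consecutive _ (by omega) (by omega)
    have htail : ∑ i ∈ Finset.Ico (p+1) n, ρ (c i) (c (i+1)) ≤ S/2 := by linarith
    have hmid : ρ (c p) (c (p+1)) ≤ S := by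
      rw [hSdef]
      exact Finset.single_le_sum (f := fun i => ρ (c i) (c (i+1)))
        (fun i _ => (hpos _ _).le) (mem_range.mpr hpn)
    have hright : p + 1 < n → (3 - 2*K) * ρ (c (p+1)) (c n) ≤ S/2 := by
      intro h
      have hIH := IH (n - (p+1)) (by omega) (fun i => c (p+1+i)) (by omega)
      have hsum : ∑ i ∈ Finset.range (n - (p+1)), ρ (c (p+1+i)) (c (p+1+i+1))
          = ∑ i ∈ Finset.Ico (p+1) n, ρ (c i) (c (i+1)) := by
        rw [Finset.sum_Ico_eq_sum_range]
      have he : c (p+1+(n-(p+1))) = c n := by congr 1; omega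
      rw [he] at hIH
      calc (3-2*K) * ρ (c (p+1)) (c n) = (3-2*K) * ρ (c (p+1+0)) (c n) := by norm_num
        _ ≤ ∑ i ∈ Finset.range (n - (p+1)), ρ (c (p+1+i)) (c (p+1+i+1)) := hIH
        _ = ∑ i ∈ Finset.Ico (p+1) n, ρ (c i) (c (i+1)) := hsum
        _ ≤ S/2 := htail
    by_cases hp0 : p = 0
    · subst hp0
      have key := hult (c 0) (c 1) (c n)
      have hD : (3-2*K) * ρ (c 1) (c n) ≤ S/2 := hright (by omega)
      rcases max_cases (ρ (c 0) (c 1)) (ρ (c 1) (c n)) with ⟨hm,_⟩|⟨hm,_⟩ <;> rw [hm] at key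
      · exact arith1 K _ S _ hK1 hK2 hSpos (hpos _ _) key hmid
      · exact arith2 K _ S _ hK1 hK2 hSpos (hpos _ _) key hD
    · have hp1' : 1 ≤ p := by omega
      have hA : (3-2*K) * ρ (c 0) (c p) ≤ S/2 :=
        le_trans (IH p (by omega) c hp1') hple
      have key := hult (c 0) (c p) (c n)
      rcases max_cases (ρ (c 0) (c p)) (ρ (c p) (c n)) with ⟨hm,_⟩|⟨hm,_⟩ <;> rw [hm] at key
      · exact arith2 K _ S _ hK1 hK2 hSpos (hpos _ _) key hA
      · by_cases hpn' : p + 1 = n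
        · have hB : ρ (c p) (c n) ≤ S := by rw [← hpn']; exact hmid
          exact arith1 K _ S _ hK1 hK2 hSpos (hpos _ _) key hB
        · have hD : (3-2*K) * ρ (c (p+1)) (c n) ≤ S/2 := hright (by omega)
          have key2 := hult (c p) (c (p+1)) (c n)
          rcases max_cases (ρ (c p) (c (p+1))) (ρ (c (p+1)) (c n)) with ⟨hm2,_⟩|⟨hm2,_⟩ <;>
              rw [hm2] at key2
          · exact arith3 K _ S _ hK1 hK2 hSpos (hpos _ _)
              (key.trans (mul_le_mul_of_nonneg_left key2 hc0)) hmid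
          · exact arith4 K _ S _ hK1 hK2 hSpos (hpos _ _)
              (key.trans (mul_le_mul_of_nonneg_left key2 hc0)) hD

end AuxChain

noncomputable section AuxNat

open Filter

variable {H : Type*} [MetricSpace H]

private lemma liminf_swap (f : ℕ × ℕ → ℝ) :
    liminf (f ∘ Prod.swap) (atTop ×ˢ atTop) = liminf f (atTop ×ˢ atTop) := by
  rw [show liminf f ((atTop : Filter ℕ) ×ˢ atTop)
      = liminf f (Filter.map Prod.swap (atTop ×ˢ atTop)) by
    congr 1; exact (Filter.prod_comm ..) ▸ rfl]
  simp [Filter.liminf, Filter.map_map]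

private lemma gromovProd_comm (a b z : H) : gromovProd a b z = gromovProd b a z := by
  unfold gromovProd; rw [dist_comm a b]; ring

private lemma gromovProdExt_comm (C : GromovCompletion H) (z : H) (ξ η : C.Hb) :
    gromovProdExt C z ξ η = gromovProdExt C z η ξ := by
  unfold gromovProdExt
  congr 1
  ext r
  constructor
  · rintro ⟨s, t, hs, ht, rfl⟩
    refine ⟨t, s, ht, hs, ?_⟩
    rw [show (fun p : ℕ × ℕ => gromovProd (t p.1) (s p.2) z)
        = (fun p : ℕ × ℕ => gromovProd (s p.1) (t p.2) z) ∘ Prod.swap from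
      funext fun p => gromovProd_comm ..]
    rw [liminf_swap]
  · rintro ⟨s, t, hs, ht, rfl⟩
    refine ⟨t, s, ht, hs, ?_⟩
    rw [show (fun p : ℕ × ℕ => gromovProd (t p.1) (s p.2) z)
        = (fun p : ℕ × ℕ => gromovProd (s p.1) (t p.2) z) ∘ Prod.swap from
      funext fun p => gromovProd_comm ..]
    rw [liminf_swap]

/-- ℕ-indexed description of the chain sums. -/
private def natChainSums (C : GromovCompletion H) (ε : ℝ) (x : H) (ξ η : C.Hb) : Set ℝ :=
  {r | ∃ n : ℕ, 1 ≤ n ∧ ∃ c : ℕ → C.Hb, c 0 = ξ ∧ c n = η ∧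
    r = ∑ i ∈ Finset.range n, Real.exp (-(ε * gromovProdExt C x (c i) (c (i+1))))}

open scoped Classical in
private lemma rhoVisual_eq_nat (C : GromovCompletion H) (ε : ℝ) (x : H) (ξ η : C.Hb) :
    rhoVisual C ε x ξ η = if ξ = η then 0 else sInf (natChainSums C ε x ξ η) := by
  have hset : {r | ∃ (n : ℕ) (c : Fin (n + 2) → C.Hb), c 0 = ξ ∧ c (Fin.last (n + 1)) = η ∧
      r = ∑ i : Fin (n + 1),
        Real.exp (-(ε * gromovProdExt C x (c i.castSucc) (c i.succ)))}
      = natChainSums C ε x ξ η := by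
    ext r
    constructor
    · rintro ⟨n, c, h0, hl, rfl⟩
      refine ⟨n+1, by omega, fun k => c ⟨min k (n+1), by omega⟩, ?_, ?_, ?_⟩
      · rw [← h0]
        exact congrArg c (Fin.ext (by simp))
      · rw [← hl]
        exact congrArg c (Fin.ext (by simp))
      · have key : ∀ i : Fin (n+1),
            Real.exp (-(ε * gromovProdExt C x (c i.castSucc) (c i.succ)))
            = (fun k : ℕ => Real.exp (-(ε * gromovProdExt C x
                (c ⟨min k (n+1), by omega⟩) (c ⟨min (k+1) (n+1), by omega⟩)))) (i : ℕ) := by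
          intro i
          have hi := i.isLt
          have h1 : (⟨min (i:ℕ) (n+1), by omega⟩ : Fin (n+2)) = i.castSucc :=
            Fin.ext (by simp only [Fin.coe_castSucc]; omega)
          have h2 : (⟨min ((i:ℕ)+1) (n+1), by omega⟩ : Fin (n+2)) = i.succ :=
            Fin.ext (by simp only [Fin.val_succ]; omega)
          simp only [h1, h2]
        show (∑ i : Fin (n + 1),
            Real.exp (-(ε * gromovProdExt C x (c i.castSucc) (c i.succ))))
          = ∑ i ∈ Finset.range (n+1), (fun k : ℕ => Real.exp (-(ε * gromovProdExt C x
              (c ⟨min k (n+1), by omega⟩) (c ⟨min (k+1) (n+1), by omega⟩)))) i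
        rw [← Fin.sum_univ_eq_sum_range (fun k : ℕ => Real.exp (-(ε * gromovProdExt C x
              (c ⟨min k (n+1), by omega⟩) (c ⟨min (k+1) (n+1), by omega⟩)))) (n+1)]
        exact Finset.sum_congr rfl (fun i _ => key i)
    · rintro ⟨N, hN, c, h0, hE, rfl⟩
      refine ⟨N-1, fun j => c j, ?_, ?_, ?_⟩
      · simpa using h0
      · show c ((Fin.last (N-1+1) : Fin (N-1+2)) : ℕ) = η
        rw [← hE]; congr 1; simp; omega
      · have key : ∀ i : Fin (N-1+1),
            Real.exp (-(ε * gromovProdExt C x (c (i.castSucc : Fin (N-1+2)))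
              (c (i.succ : Fin (N-1+2)))))
            = (fun k : ℕ => Real.exp (-(ε * gromovProdExt C x (c k) (c (k+1))))) (i : ℕ) := by
          intro i
          rfl
        rw [Finset.sum_congr rfl (fun i _ => key i),
          Fin.sum_univ_eq_sum_range
            (fun k : ℕ => Real.exp (-(ε * gromovProdExt C x (c k) (c (k+1))))) (N-1+1)]
        apply Finset.sum_congr (by congr 1; omega) (fun i _ => rfl)
  unfold rhoVisual
  rw [hset]

private lemma natChainSums_nonneg (C : GromovCompletion H) (ε : ℝ) (x : H) (ξ η : C.Hb) :
    ∀ r ∈ natChainSums C ε x ξ η, 0 ≤ r := by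
  rintro r ⟨n, hn, c, h0, hE, rfl⟩
  positivity

private lemma natChainSums_nonempty (C : GromovCompletion H) (ε : ℝ) (x : H) (ξ η : C.Hb) :
    (natChainSums C ε x ξ η).Nonempty := by
  refine ⟨Real.exp (-(ε * gromovProdExt C x ξ η)), 1, le_refl 1,
    fun k => if k = 0 then ξ else η, by simp, by simp, ?_⟩
  simp

private lemma natChainSums_bddBelow (C : GromovCompletion H) (ε : ℝ) (x : H) (ξ η : C.Hb) :
    BddBelow (natChainSums C ε x ξ η) :=
  ⟨0, fun r hr => natChainSums_nonneg C ε x ξ η r hr⟩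

private lemma natChainSums_rev (C : GromovCompletion H) (ε : ℝ) (x : H) (ξ η : C.Hb)
    (r : ℝ) (hr : r ∈ natChainSums C ε x ξ η) : r ∈ natChainSums C ε x η ξ := by
  obtain ⟨n, hn, c, h0, hE, rfl⟩ := hr
  refine ⟨n, hn, fun k => c (n - k), by simpa using hE, by simpa using h0, ?_⟩
  rw [← Finset.sum_range_reflect
    (fun j => Real.exp (-(ε * gromovProdExt C x (c j) (c (j+1))))) n]
  refine Finset.sum_congr rfl fun i hi => ?_
  have hi' : i < n := Finset.mem_range.mp hi
  show Real.exp (-(ε * gromovProdExt C x (c (n-1-i)) (c (n-1-i+1))))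
    = Real.exp (-(ε * gromovProdExt C x (c (n-i)) (c (n-(i+1)))))
  have e1 : c (n - (i+1)) = c (n-1-i) := congrArg c (by omega)
  have e2 : c (n - i) = c (n-1-i+1) := congrArg c (by omega)
  rw [e1, e2, gromovProdExt_comm]

private lemma natChainSums_concat (C : GromovCompletion H) (ε : ℝ) (x : H) (ξ η ζ : C.Hb)
    (r r' : ℝ) (hr : r ∈ natChainSums C ε x ξ η) (hr' : r' ∈ natChainSums C ε x η ζ) :
    r + r' ∈ natChainSums C ε x ξ ζ := by
  obtain ⟨n, hn, c, hc0, hcn, rfl⟩ := hr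
  obtain ⟨m, hm, d, hd0, hdm, rfl⟩ := hr'
  set e : ℕ → C.Hb := fun k => if k < n then c k else d (k - n) with hedef
  have heC : ∀ k, k ≤ n → e k = c k := by
    intro k hk
    by_cases h : k < n
    · simp [hedef, h]
    · have hkn : k = n := by omega
      subst hkn
      simp [hedef, hd0, hcn]
  have heD : ∀ k, n ≤ k → e k = d (k - n) := by
    intro k hk
    have h : ¬ k < n := by omega
    simp [hedef, h]
  refine ⟨n + m, by omega, e, ?_, ?_, ?_⟩
  · rw [heC 0 (by omega)]; exact hc0
  · rw [heD (n+m) (by omega)]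
    rw [show n + m - n = m by omega]; exact hdm
  · rw [show ∑ i ∈ Finset.range (n+m),
        Real.exp (-(ε * gromovProdExt C x (e i) (e (i+1))))
      = ∑ i ∈ Finset.range n, Real.exp (-(ε * gromovProdExt C x (e i) (e (i+1))))
      + ∑ i ∈ Finset.Ico n (n+m), Real.exp (-(ε * gromovProdExt C x (e i) (e (i+1)))) by
        simp only [Finset.range_eq_Ico]
        rw [Finset.sum_Ico_consecutive _ (by omega) (by omega)]]
    congr 1
    · refine Finset.sum_congr rfl fun i hi => ?_
      have hi' : i < n := Finset.mem_range.mp hi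
      rw [heC i (by omega), heC (i+1) (by omega)]
    · rw [Finset.sum_Ico_eq_sum_range]
      rw [show n + m - n = m by omega]
      refine Finset.sum_congr rfl fun i hi => ?_
      rw [heD (n+i) (by omega), heD (n+i+1) (by omega),
        show n + i - n = i by omega, show n + i + 1 - n = i + 1 by omega]

end AuxNat

/-- if `H` is δ-hyperbolic (with the four-point condition holding for all
points of the completion) and `5εδ ≤ 1`, then `ρ_ε` is a metric on the Gromov
completion `H̄`. -/
theorem rhoVisual_is_metric {H : Type*} [MetricSpace H]
    (δ ε : ℝ) (hδ0 : 0 ≤ δ) (hε : 0 < ε) (hεδ : 5 * ε * δ ≤ 1)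
    (hδ : ∀ x y z w : H, min (gromovProd x w z) (gromovProd w y z) - δ ≤ gromovProd x y z)
    (C : GromovCompletion H)
    (hδext : ∀ (z : H) (ξ η w : C.Hb),
      min (gromovProdExt C z ξ w) (gromovProdExt C z w η) - δ ≤ gromovProdExt C z ξ η)
    (x : H) :
    (∀ ξ η : C.Hb, 0 ≤ rhoVisual C ε x ξ η) ∧
    (∀ ξ η : C.Hb, rhoVisual C ε x ξ η = rhoVisual C ε x η ξ) ∧
    (∀ ξ η : C.Hb, rhoVisual C ε x ξ η = 0 ↔ ξ = η) ∧
    (∀ ξ η ζ : C.Hb,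
      rhoVisual C ε x ξ ζ ≤ rhoVisual C ε x ξ η + rhoVisual C ε x η ζ) := by
  set K : ℝ := Real.exp (ε * δ) with hK
  have hK0 : (0:ℝ) < K := Real.exp_pos _
  have hK1 : 1 ≤ K := Real.one_le_exp (by positivity)
  have hKm : K * Real.exp (-(ε*δ)) = 1 := by rw [hK, ← Real.exp_add]; simp
  have hlow : 1 - ε*δ ≤ Real.exp (-(ε*δ)) := by linarith [Real.add_one_le_exp (-(ε*δ))]
  have hεδ1 : ε*δ ≤ 1/5 := by nlinarith
  have hεδ0 : 0 ≤ ε*δ := by positivity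
  have hK2 : K ≤ 5/4 := by
    nlinarith [mul_le_mul_of_nonneg_left hlow hK0.le]
  have hult : ∀ a b w : C.Hb, Real.exp (-(ε * gromovProdExt C x a w))
      ≤ K * max (Real.exp (-(ε * gromovProdExt C x a b)))
          (Real.exp (-(ε * gromovProdExt C x b w))) := by
    intro a b w
    have h := hδext x a w b
    rcases le_total (gromovProdExt C x a b) (gromovProdExt C x b w) with h' | h'
    · rw [min_eq_left h'] at h
      have h3 : Real.exp (-(ε * gromovProdExt C x a w))
          ≤ K * Real.exp (-(ε * gromovProdExt C x a b)) := by
        rw [hK, ← Real.exp_add]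
        apply Real.exp_le_exp.mpr
        nlinarith [mul_le_mul_of_nonneg_left h hε.le]
      exact h3.trans (mul_le_mul_of_nonneg_left (le_max_left _ _) hK0.le)
    · rw [min_eq_right h'] at h
      have h3 : Real.exp (-(ε * gromovProdExt C x a w))
          ≤ K * Real.exp (-(ε * gromovProdExt C x b w)) := by
        rw [hK, ← Real.exp_add]
        apply Real.exp_le_exp.mpr
        nlinarith [mul_le_mul_of_nonneg_left h hε.le]
      exact h3.trans (mul_le_mul_of_nonneg_left (le_max_right _ _) hK0.le)
  have hnn : ∀ ξ η : C.Hb, 0 ≤ rhoVisual C ε x ξ η := by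
    intro ξ η
    rw [rhoVisual_eq_nat]
    split_ifs
    · exact le_refl 0
    · exact Real.sInf_nonneg (natChainSums_nonneg C ε x ξ η)
  have hzero : ∀ ξ η : C.Hb, ξ = η → rhoVisual C ε x ξ η = 0 := by
    intro ξ η h
    rw [rhoVisual_eq_nat, if_pos h]
  have hbound : ∀ ξ η : C.Hb, ξ ≠ η →
      (1/2) * Real.exp (-(ε * gromovProdExt C x ξ η)) ≤ rhoVisual C ε x ξ η := by
    intro ξ η hne
    rw [rhoVisual_eq_nat, if_neg hne]
    apply le_csInf (natChainSums_nonempty C ε x ξ η)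
    rintro r ⟨n, hn, c, h0, hE, rfl⟩
    have hcl := chain_lower (fun a b => Real.exp (-(ε * gromovProdExt C x a b))) K hK1 hK2
      (fun a b => Real.exp_pos _) hult n c hn
    rw [h0, hE] at hcl
    have hp := Real.exp_pos (-(ε * gromovProdExt C x ξ η))
    nlinarith
  refine ⟨hnn, ?_, ?_, ?_⟩
  · intro ξ η
    by_cases h : ξ = η
    · rw [h]
    · rw [rhoVisual_eq_nat, rhoVisual_eq_nat, if_neg h, if_neg (Ne.symm h)]
      congr 1
      ext r
      exact ⟨fun hr => natChainSums_rev C ε x ξ η r hr,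
        fun hr => natChainSums_rev C ε x η ξ r hr⟩
  · intro ξ η
    constructor
    · intro h0
      by_contra hne
      have hb := hbound ξ η hne
      have hp := Real.exp_pos (-(ε * gromovProdExt C x ξ η))
      rw [h0] at hb
      nlinarith
    · exact hzero ξ η
  · intro ξ η ζ
    by_cases hxz : ξ = ζ
    · rw [hzero ξ ζ hxz]
      exact add_nonneg (hnn _ _) (hnn _ _)
    by_cases hxy : ξ = η
    · rw [hzero ξ η hxy, zero_add, hxy]
    by_cases hyz : η = ζ
    · rw [hzero η ζ hyz, add_zero, ← hyz]
    rw [rhoVisual_eq_nat C ε x ξ ζ, rhoVisual_eq_nat C ε x ξ η,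
      rhoVisual_eq_nat C ε x η ζ, if_neg hxz, if_neg hxy, if_neg hyz]
    have hconc : ∀ a ∈ natChainSums C ε x ξ η, ∀ b ∈ natChainSums C ε x η ζ,
        sInf (natChainSums C ε x ξ ζ) ≤ a + b := fun a ha b hb =>
      csInf_le (natChainSums_bddBelow C ε x ξ ζ) (natChainSums_concat C ε x ξ η ζ a b ha hb)
    have h1 : ∀ b ∈ natChainSums C ε x η ζ,
        sInf (natChainSums C ε x ξ ζ) - b ≤ sInf (natChainSums C ε x ξ η) :=
      fun b hb => le_csInf (natChainSums_nonempty C ε x ξ η)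
        (fun a ha => by linarith [hconc a ha b hb])
    have h2 : sInf (natChainSums C ε x ξ ζ) - sInf (natChainSums C ε x ξ η)
        ≤ sInf (natChainSums C ε x η ζ) :=
      le_csInf (natChainSums_nonempty C ε x η ζ) (fun b hb => by linarith [h1 b hb])
    linarith
end

section
/- Let π: B → X be a separable metric bundle over a standard probability space (X,μ) with all fibers compact metric spaces. An element ν of the convex space Prob(π) of Borel fields of probability measures is an extreme point if and only if ν_x is a Dirac measure for μ-almost every x. -/
open MeasureTheory Filter Topology

/-- A separable metric bundle over a Borel space `X`: a Borel surjection `π : B → X`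
with a Borel fiberwise metric `d` and a countable family of Borel sections with dense
values in every fiber. -/
structure MetricBundle (X : Type*) [MeasurableSpace X] (B : Type*) [MeasurableSpace B] where
  π : B → X
  measπ : Measurable π
  surj : Function.Surjective π
  d : B → B → ℝ
  measd : Measurable fun p : B × B => d p.1 p.2
  d_self : ∀ b, d b b = 0
  d_comm : ∀ a b, d a b = d b a
  d_nonneg : ∀ a b, 0 ≤ d a b
  d_triangle : ∀ a b c, π a = π b → π b = π c → d a c ≤ d a b + d b c
  d_eq : ∀ a b, π a = π b → d a b = 0 → a = b
  sec : ℕ → X → B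
  sec_meas : ∀ n, Measurable (sec n)
  sec_sect : ∀ n x, π (sec n x) = x
  sec_dense : ∀ (b : B) (ε : ℝ), 0 < ε → ∃ n, d b (sec n (π b)) < ε

variable {X : Type*} [MeasurableSpace X] {B : Type*} [MeasurableSpace B]

/-- The fiber of the bundle over `x`. -/
def MetricBundle.Fib (P : MetricBundle X B) (x : X) : Type _ := {b : B // P.π b = x}

noncomputable instance (P : MetricBundle X B) (x : X) : MetricSpace (P.Fib x) where
  dist a b := P.d a.1 b.1
  dist_self a := P.d_self a.1
  dist_comm a b := P.d_comm a.1 b.1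
  dist_triangle a b c :=
    P.d_triangle a.1 b.1 c.1 (a.2.trans b.2.symm) (b.2.trans c.2.symm)
  eq_of_dist_eq_zero := fun {a b} h =>
    Subtype.ext (P.d_eq a.1 b.1 (a.2.trans b.2.symm) h)

instance (P : MetricBundle X B) (x : X) : MeasurableSpace (P.Fib x) :=
  Subtype.instMeasurableSpace

/-- A test function for the bundle: a bounded Borel function which is continuous on
every fiber (an element of `C(π)`; since fibers are compact, `C_0(π) = C(π)`). -/
structure MetricBundle.TestFun (P : MetricBundle X B) where
  F : B → ℝ
  meas : Measurable F
  cont : ∀ x : X, Continuous fun b : P.Fib x => F b.1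
  bdd : ∃ M : ℝ, ∀ b, |F b| ≤ M

/-- A Borel field of fiberwise probability measures. -/
structure MetricBundle.MeasField (P : MetricBundle X B) where
  ν : ∀ x : X, Measure (P.Fib x)
  prob : ∀ x, IsProbabilityMeasure (ν x)
  meas : ∀ G : P.TestFun, Measurable fun x => ∫ b, G.F b.1 ∂(ν x)

/-- The pairing `⟨ν, F⟩ = ∫_X ∫ F_x dν_x dμ(x)` between fields of measures and test
functions; the weak topology on fields is induced by these pairings, i.e. by the map
`fieldFunctional` into `C(π)*` with the weak* (product) topology. -/
noncomputable def MetricBundle.pairing (P : MetricBundle X B) (μ : Measure X)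
    (m : P.MeasField) (G : P.TestFun) : ℝ :=
  ∫ x, (∫ b, G.F b.1 ∂(m.ν x)) ∂μ

/-- The canonical map `Ψ` from fields of measures to functionals on test functions. -/
noncomputable def MetricBundle.fieldFunctional (P : MetricBundle X B) (μ : Measure X) :
    P.MeasField → (P.TestFun → ℝ) :=
  fun m G => P.pairing μ m G

section Helpers
variable {α : Type*} [MeasurableSpace α]

lemma integrable_of_bound' (ν : Measure α) [IsFiniteMeasure ν] (f : α → ℝ)
    (hf : Measurable f) (M : ℝ) (hM : ∀ a, |f a| ≤ M) : Integrable f ν :=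
  Integrable.mono' (integrable_const M) hf.aestronglyMeasurable
    (Filter.Eventually.of_forall fun a => hM a)

lemma expand_mul (ν : Measure α) [IsProbabilityMeasure ν]
    (f : α → ℝ) (hf : Measurable f) (M : ℝ) (hM : ∀ a, |f a| ≤ M) (c : ℝ) :
    ∫ a, (f a - c) * (f a - c) ∂ν
      = ∫ a, f a * f a ∂ν - 2 * c * ∫ a, f a ∂ν + c * c := by
  have hM' : ∀ a, |f a| ≤ max M 0 := fun a => (hM a).trans (le_max_left _ _)
  have hMnn : (0:ℝ) ≤ max M 0 := le_max_right _ _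
  have h1 : Integrable (fun a => f a * f a) ν :=
    integrable_of_bound' ν _ (hf.mul hf) (max M 0 * max M 0) fun a => by
      rw [abs_mul]; exact mul_le_mul (hM' a) (hM' a) (abs_nonneg _) hMnn
  have h2 : Integrable f ν := integrable_of_bound' ν f hf _ hM'
  have h3 : Integrable (fun a => 2 * c * f a) ν := h2.const_mul _
  have key : (fun a => (f a - c) * (f a - c))
      = fun a => f a * f a - (2 * c * f a - c * c) := by
    funext a; ring
  have h4 : Integrable (fun a => 2 * c * f a - c * c) ν := h3.sub (integrable_const _)
  rw [key, integral_sub h1 h4, integral_sub h3 (integrable_const _),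
    integral_const_mul, integral_const]
  simp [measure_univ]
  ring

lemma sq_integral_le' (ν : Measure α) [IsProbabilityMeasure ν]
    (f : α → ℝ) (hf : Measurable f) (M : ℝ) (hM : ∀ a, |f a| ≤ M) :
    (∫ a, f a ∂ν) * (∫ a, f a ∂ν) ≤ ∫ a, f a * f a ∂ν := by
  have h := expand_mul ν f hf M hM (∫ a, f a ∂ν)
  have h0 : 0 ≤ ∫ a, (f a - ∫ a, f a ∂ν) * (f a - ∫ a, f a ∂ν) ∂ν :=
    integral_nonneg fun a => mul_self_nonneg _
  nlinarith [h, h0]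

end Helpers


section BundleHelpers

namespace MetricBundle

variable {X : Type*} [MeasurableSpace X] {B : Type*} [MeasurableSpace B]
variable (P : MetricBundle X B)

/-- Product of two test functions. -/
noncomputable def TestFun.mul (G H : P.TestFun) : P.TestFun where
  F := fun b => G.F b * H.F b
  meas := G.meas.mul H.meas
  cont := fun x => (G.cont x).mul (H.cont x)
  bdd := by
    obtain ⟨M, hM⟩ := G.bdd
    obtain ⟨N, hN⟩ := H.bdd
    refine ⟨max M 0 * max N 0, fun b => ?_⟩
    rw [abs_mul]
    exact mul_le_mul ((hM b).trans (le_max_left _ _)) ((hN b).trans (le_max_left _ _))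
      (abs_nonneg _) (le_max_right _ _)

/-- Test function coming from a bounded measurable function on the base. -/
noncomputable def TestFun.base (c : X → ℝ) (hc : Measurable c) (M : ℝ)
    (hM : ∀ x, |c x| ≤ M) : P.TestFun where
  F := fun b => c (P.π b)
  meas := hc.comp P.measπ
  cont := fun x => by
    have : (fun b : P.Fib x => c (P.π b.1)) = fun _ => c x :=
      funext fun b => by rw [b.2]
    rw [this]
    exact continuous_const
  bdd := ⟨M, fun b => hM _⟩

/-- The canonical countable separating family of test functions. -/
noncomputable def gTest (n : ℕ) : P.TestFun where
  F := fun b => min (P.d b (P.sec n (P.π b))) 1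
  meas := (P.measd.comp (measurable_id.prodMk ((P.sec_meas n).comp P.measπ))).min
    measurable_const
  cont := fun x => by
    have key : (fun b : P.Fib x => min (P.d b.1 (P.sec n (P.π b.1))) 1)
        = fun b : P.Fib x => min (dist b (⟨P.sec n x, P.sec_sect n x⟩ : P.Fib x)) 1 :=
      funext fun b => by rw [b.2]; rfl
    rw [key]
    exact (continuous_id.dist continuous_const).min continuous_const
  bdd := ⟨1, fun b => by
    rw [abs_of_nonneg (le_min (P.d_nonneg _ _) one_pos.le)]
    exact min_le_right _ _⟩

lemma gTest_nonneg (n : ℕ) (b : B) : 0 ≤ (P.gTest n).F b :=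
  le_min (P.d_nonneg _ _) one_pos.le

lemma gTest_le_one (n : ℕ) (b : B) : (P.gTest n).F b ≤ 1 := min_le_right _ _

/-- Integrability of a test function on a fiber. -/
lemma fiber_integrable (m' : P.MeasField) (G : P.TestFun) (x : X) :
    Integrable (fun b : P.Fib x => G.F b.1) (m'.ν x) := by
  haveI := m'.prob x
  obtain ⟨M, hM⟩ := G.bdd
  exact integrable_of_bound' _ _ (G.meas.comp measurable_subtype_coe) M fun b => hM _

lemma fieldI_bound (m' : P.MeasField) (G : P.TestFun) (M : ℝ)
    (hM : ∀ b, |G.F b| ≤ M) (x : X) :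
    |∫ b, G.F b.1 ∂(m'.ν x)| ≤ M := by
  haveI := m'.prob x
  have h := norm_integral_le_of_norm_le_const
    (μ := m'.ν x) (f := fun b : P.Fib x => G.F b.1) (C := M)
    (Filter.Eventually.of_forall fun b => hM _)
  simpa [measure_univ] using h

/-- A probability measure on a fiber all of whose canonical variances vanish is Dirac. -/
lemma dirac_of_var_zero (x : X) (ν : Measure (P.Fib x)) [IsProbabilityMeasure ν]
    (h : ∀ n, ∫ b, (P.gTest n).F b.1 * (P.gTest n).F b.1 ∂ν
        = (∫ b, (P.gTest n).F b.1 ∂ν) * (∫ b, (P.gTest n).F b.1 ∂ν)) :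
    ∃ b, ν = Measure.dirac b := by
  set g : ℕ → P.Fib x → ℝ := fun n b => (P.gTest n).F b.1 with hg
  have gmeas : ∀ n, Measurable (g n) := fun n =>
    (P.gTest n).meas.comp measurable_subtype_coe
  set c : ℕ → ℝ := fun n => ∫ b, g n b ∂ν with hc
  -- each g n is a.e. equal to c n
  have hnull : ∀ n, ν {b | ¬ g n b = c n} = 0 := by
    intro n
    have hbd : ∀ b, |g n b| ≤ 1 := fun b => by
      rw [abs_of_nonneg (P.gTest_nonneg n _)]; exact P.gTest_le_one n _
    have hexp := expand_mul ν (g n) (gmeas n) 1 hbd (c n)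
    have hzero : ∫ b, (g n b - c n) * (g n b - c n) ∂ν = 0 := by
      rw [hexp, h n]; ring
    have hint : Integrable (fun b => (g n b - c n) * (g n b - c n)) ν := by
      refine integrable_of_bound' _ _ (((gmeas n).sub measurable_const).mul
        ((gmeas n).sub measurable_const)) 4 fun b => ?_
      have h2 : |c n| ≤ 1 := by
        have hcn := norm_integral_le_of_norm_le_const (μ := ν) (f := g n) (C := 1)
          (Filter.Eventually.of_forall fun b => hbd b)
        simpa [measure_univ] using hcn
      have h1 : |g n b - c n| ≤ 2 := by
        have hb1 := abs_le.mp (hbd b)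
        have hb2 := abs_le.mp h2
        rw [abs_le]
        constructor <;> linarith
      calc |(g n b - c n) * (g n b - c n)| = |g n b - c n| * |g n b - c n| := abs_mul _ _
        _ ≤ 2 * 2 := mul_le_mul h1 h1 (abs_nonneg _) (by norm_num)
        _ = 4 := by norm_num
    have hae := (integral_eq_zero_iff_of_nonneg
      (fun b => mul_self_nonneg _) hint).mp hzero
    have : ∀ᵐ b ∂ν, g n b = c n := by
      filter_upwards [hae] with b hb
      have : (g n b - c n) * (g n b - c n) = 0 := hb
      have := mul_self_eq_zero.mp this
      linarith
    simpa [ae_iff] using this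
  set N : Set (P.Fib x) := ⋂ n, {b | g n b = c n} with hN
  have hNmeas : MeasurableSet N :=
    MeasurableSet.iInter fun n => (gmeas n) (measurableSet_singleton (c n))
  have hNc : ν Nᶜ = 0 := by
    rw [hN, Set.compl_iInter]
    exact measure_iUnion_null fun n => by simpa [Set.compl_setOf] using hnull n
  have hN1 : ν N = 1 := (prob_compl_eq_zero_iff hNmeas).mp hNc
  have hNne : N.Nonempty := by
    by_contra hemp
    rw [Set.not_nonempty_iff_eq_empty] at hemp
    rw [hemp, measure_empty] at hN1
    exact zero_ne_one hN1
  obtain ⟨b₀, hb₀⟩ := hNne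
  have huniq : ∀ b' ∈ N, b' = b₀ := by
    intro b' hb'
    by_contra hne
    have hdpos : 0 < dist b₀ b' := dist_pos.mpr fun hh => hne hh.symm
    set mm : ℝ := min (dist b₀ b') 1 with hmm
    have hmpos : 0 < mm := lt_min hdpos one_pos
    have hmle : mm ≤ 1 := min_le_right _ _
    obtain ⟨n, hn⟩ := P.sec_dense b₀.1 (mm/3) (by linarith)
    have hπ0 : P.π b₀.1 = x := b₀.2
    have hπ' : P.π b'.1 = x := b'.2
    set sp : B := P.sec n x with hsp
    have hπs : P.π sp = x := P.sec_sect n x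
    have hn' : P.d b₀.1 sp < mm / 3 := by rwa [hπ0] at hn
    have hgb0 : g n b₀ = min (P.d b₀.1 sp) 1 := by
      simp only [hg, MetricBundle.gTest, hπ0, hsp]
    have hgb' : g n b' = min (P.d b'.1 sp) 1 := by
      simp only [hg, MetricBundle.gTest, hπ', hsp]
    have htri : P.d b₀.1 b'.1 ≤ P.d b₀.1 sp + P.d b'.1 sp := by
      have := P.d_triangle b₀.1 sp b'.1 (by rw [hπ0, hπs]) (by rw [hπs, hπ'])
      rw [P.d_comm sp b'.1] at this
      linarith
    have hdist : mm ≤ P.d b₀.1 b'.1 := min_le_left _ _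
    have hlow : mm / 3 < P.d b'.1 sp := by
      have : dist b₀ b' = P.d b₀.1 b'.1 := rfl
      linarith
    have h1 : g n b₀ < mm / 3 := by
      rw [hgb0]
      exact lt_of_le_of_lt (min_le_left _ _) hn'
    have h2 : mm / 3 < g n b' := by
      rw [hgb']
      exact lt_min hlow (by linarith)
    have hc0 : g n b₀ = c n := Set.mem_iInter.mp hb₀ n
    have hc' : g n b' = c n := Set.mem_iInter.mp hb' n
    rw [hc0, ← hc'] at h1
    linarith
  have hNs : N = {b₀} := Set.eq_singleton_iff_unique_mem.mpr ⟨hb₀, huniq⟩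
  refine ⟨b₀, ?_⟩
  ext s hs
  rw [Measure.dirac_apply' b₀ hs]
  by_cases hbs : b₀ ∈ s
  · have hsub : N ⊆ s := by rw [hNs]; simpa using hbs
    have hle : ν N ≤ ν s := measure_mono hsub
    rw [hN1] at hle
    have hge : ν s ≤ 1 := prob_le_one
    rw [le_antisymm hge hle]
    simp [Set.indicator_of_mem hbs]
  · have hsub : s ⊆ Nᶜ := by
      intro y hy
      rw [hNs]
      simp only [Set.mem_compl_iff, Set.mem_singleton_iff]
      rintro rfl
      exact hbs hy
    have h0 : ν s = 0 := le_antisymm ((measure_mono hsub).trans_eq hNc) zero_le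
    rw [h0]
    simp [Set.indicator_of_notMem hbs]

lemma integral_mul_base (m' : P.MeasField) (G : P.TestFun) (c : X → ℝ)
    (hc : Measurable c) (M : ℝ) (hM : ∀ x, |c x| ≤ M) (x : X) :
    ∫ b, (TestFun.mul P G (TestFun.base P c hc M hM)).F b.1 ∂(m'.ν x)
      = (∫ b, G.F b.1 ∂(m'.ν x)) * c x := by
  have key : (fun b : P.Fib x => (TestFun.mul P G (TestFun.base P c hc M hM)).F b.1)
      = fun b : P.Fib x => G.F b.1 * c x := funext fun b => by
    show G.F b.1 * c (P.π b.1) = G.F b.1 * c x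
    rw [b.2]
  rw [key, integral_mul_const]

lemma fieldI_integrable (μ : Measure X) [IsFiniteMeasure μ] (m' : P.MeasField)
    (G : P.TestFun) : Integrable (fun x => ∫ b, G.F b.1 ∂(m'.ν x)) μ := by
  obtain ⟨M, hM⟩ := G.bdd
  exact integrable_of_bound' μ _ (m'.meas G) M (P.fieldI_bound m' G M hM)

/-- The perturbed field of measures. -/
noncomputable def perturb (m : P.MeasField) (n : ℕ) (ε : ℝ) :
    ∀ x : X, Measure (P.Fib x) := fun x =>
  (m.ν x).withDensity fun b => ENNReal.ofReal
    (1 + ε * ((P.gTest n).F b.1 - ∫ b' : P.Fib x, (P.gTest n).F b'.1 ∂(m.ν x)))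

lemma cg_mem (m : P.MeasField) (n : ℕ) (x : X) :
    0 ≤ (∫ b' : P.Fib x, (P.gTest n).F b'.1 ∂(m.ν x))
      ∧ (∫ b' : P.Fib x, (P.gTest n).F b'.1 ∂(m.ν x)) ≤ 1 := by
  haveI := m.prob x
  constructor
  · exact integral_nonneg fun b => P.gTest_nonneg n _
  · have := P.fieldI_bound m (P.gTest n) 1 (fun b => by
      rw [abs_of_nonneg (P.gTest_nonneg n b)]; exact P.gTest_le_one n b) x
    exact (abs_le.mp this).2

lemma perturb_density_nonneg (m : P.MeasField) (n : ℕ) (ε : ℝ) (hε : |ε| ≤ 1)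
    (x : X) (b : P.Fib x) :
    0 ≤ 1 + ε * ((P.gTest n).F b.1 - ∫ b' : P.Fib x, (P.gTest n).F b'.1 ∂(m.ν x)) := by
  obtain ⟨hc0, hc1⟩ := P.cg_mem m n x
  have hg0 := P.gTest_nonneg n b.1
  have hg1 := P.gTest_le_one n b.1
  have h1 : |(P.gTest n).F b.1 - ∫ b' : P.Fib x, (P.gTest n).F b'.1 ∂(m.ν x)| ≤ 1 := by
    rw [abs_le]; constructor <;> linarith
  have h2 : |ε * ((P.gTest n).F b.1 - ∫ b' : P.Fib x, (P.gTest n).F b'.1 ∂(m.ν x))| ≤ 1 := by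
    rw [abs_mul]
    calc |ε| * _ ≤ 1 * 1 := mul_le_mul hε h1 (abs_nonneg _) zero_le_one
      _ = 1 := one_mul 1
  have := (abs_le.mp h2).1
  linarith

lemma integral_perturb_eq (m : P.MeasField) (n : ℕ) (ε : ℝ) (hε : |ε| ≤ 1) (x : X)
    (F : P.TestFun) :
    ∫ b, F.F b.1 ∂(P.perturb m n ε x)
      = (∫ b, F.F b.1 ∂(m.ν x))
        + ε * ((∫ b, F.F b.1 * (P.gTest n).F b.1 ∂(m.ν x))
          - (∫ b' : P.Fib x, (P.gTest n).F b'.1 ∂(m.ν x)) * (∫ b, F.F b.1 ∂(m.ν x))) := by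
  haveI := m.prob x
  set c : ℝ := ∫ b' : P.Fib x, (P.gTest n).F b'.1 ∂(m.ν x) with hcdef
  set g : P.Fib x → ℝ := fun b => (P.gTest n).F b.1 with hgdef
  set w : P.Fib x → ℝ := fun b => 1 + ε * (g b - c) with hwdef
  have hw_nonneg : ∀ b, 0 ≤ w b := fun b => P.perturb_density_nonneg m n ε hε x b
  have hg_meas : Measurable g := (P.gTest n).meas.comp measurable_subtype_coe
  have hw_meas : Measurable w :=
    measurable_const.add ((hg_meas.sub measurable_const).const_mul ε)
  have hF_meas : Measurable (fun b : P.Fib x => F.F b.1) :=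
    F.meas.comp measurable_subtype_coe
  obtain ⟨M₀, hM₀⟩ := F.bdd
  set M : ℝ := max M₀ 0 with hMdef
  have hM : ∀ b : P.Fib x, |F.F b.1| ≤ M := fun b => (hM₀ b.1).trans (le_max_left _ _)
  have hMnn : (0:ℝ) ≤ M := le_max_right _ _
  have hwbd : ∀ b, |w b| ≤ 2 := by
    intro b
    obtain ⟨hc0, hc1⟩ := P.cg_mem m n x
    have hg0 := P.gTest_nonneg n b.1
    have hg1 := P.gTest_le_one n b.1
    have h1 : |g b - c| ≤ 1 := by rw [abs_le]; constructor <;> simp [hgdef] <;> linarith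
    have h2 : |ε * (g b - c)| ≤ 1 := by
      rw [abs_mul]
      calc |ε| * _ ≤ 1 * 1 := mul_le_mul hε h1 (abs_nonneg _) zero_le_one
        _ = 1 := one_mul 1
    have h3 := (abs_le.mp h2).1
    have h4 := (abs_le.mp h2).2
    rw [abs_le]; constructor <;> simp [hwdef] <;> linarith
  have key : ∫ b, F.F b.1 ∂(P.perturb m n ε x)
      = ∫ b, w b * F.F b.1 ∂(m.ν x) := by
    show ∫ b, F.F b.1
        ∂((m.ν x).withDensity fun b => ENNReal.ofReal (w b)) = _
    have hofr : (fun b : P.Fib x => ENNReal.ofReal (w b))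
        = fun b => ((Real.toNNReal (w b) : NNReal) : ENNReal) := rfl
    rw [hofr]
    rw [integral_withDensity_eq_integral_smul hw_meas.real_toNNReal]
    congr 1
    funext b
    rw [NNReal.smul_def, Real.coe_toNNReal _ (hw_nonneg b), smul_eq_mul]
  rw [key]
  have h5 : Integrable (fun b : P.Fib x => F.F b.1 * g b) (m.ν x) := by
    refine integrable_of_bound' _ _ (hF_meas.mul hg_meas) M fun b => ?_
    have hgb : |g b| ≤ 1 := by
      show |(P.gTest n).F b.1| ≤ 1
      rw [abs_of_nonneg (P.gTest_nonneg n b.1)]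
      exact P.gTest_le_one n b.1
    rw [abs_mul]
    have h5a := mul_le_mul (hM b) hgb (abs_nonneg _) hMnn
    simpa using h5a
  have hFint : Integrable (fun b : P.Fib x => F.F b.1) (m.ν x) :=
    integrable_of_bound' _ _ hF_meas M hM
  have h6 : Integrable (fun b : P.Fib x => F.F b.1 * g b - c * F.F b.1) (m.ν x) :=
    h5.sub (hFint.const_mul c)
  have h7 : Integrable (fun b : P.Fib x => ε * (F.F b.1 * g b - c * F.F b.1)) (m.ν x) :=
    h6.const_mul ε
  have expand : (fun b : P.Fib x => w b * F.F b.1)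
      = fun b => F.F b.1 + ε * (F.F b.1 * g b - c * F.F b.1) := by
    funext b; simp only [hwdef]; ring
  rw [expand, integral_add hFint h7, integral_const_mul,
    integral_sub h5 (hFint.const_mul c), integral_const_mul]

/-- The perturbed field as a `MeasField`. -/
noncomputable def perturbField (m : P.MeasField) (n : ℕ) (ε : ℝ) (hε : |ε| ≤ 1) :
    P.MeasField where
  ν := P.perturb m n ε
  prob x := by
    haveI := m.prob x
    constructor
    show (m.ν x).withDensity _ Set.univ = 1
    rw [withDensity_apply _ MeasurableSet.univ]
    set c : ℝ := ∫ b' : P.Fib x, (P.gTest n).F b'.1 ∂(m.ν x) with hcdef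
    set g : P.Fib x → ℝ := fun b => (P.gTest n).F b.1 with hgdef
    set w : P.Fib x → ℝ := fun b => 1 + ε * (g b - c) with hwdef
    have hg_meas : Measurable g := (P.gTest n).meas.comp measurable_subtype_coe
    have hw_meas : Measurable w :=
      measurable_const.add ((hg_meas.sub measurable_const).const_mul ε)
    have hw_nonneg : ∀ b, 0 ≤ w b := fun b => P.perturb_density_nonneg m n ε hε x b
    have hgint : Integrable g (m.ν x) := P.fiber_integrable m (P.gTest n) x
    have hint2 : Integrable (fun b : P.Fib x => g b - c) (m.ν x) :=
      hgint.sub (integrable_const c)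
    have hint3 : Integrable (fun b : P.Fib x => ε * (g b - c)) (m.ν x) :=
      hint2.const_mul ε
    have hwint : Integrable w (m.ν x) := by
      have : w = fun b : P.Fib x => 1 + ε * (g b - c) := hwdef
      rw [this]
      exact (integrable_const 1).add hint3
    have hlint : ∫⁻ b in Set.univ, ENNReal.ofReal (w b) ∂(m.ν x)
        = ENNReal.ofReal (∫ b, w b ∂(m.ν x)) := by
      rw [Measure.restrict_univ]
      exact (ofReal_integral_eq_lintegral_ofReal hwint
        (Filter.Eventually.of_forall hw_nonneg)).symm
    rw [hlint]
    have : ∫ b, w b ∂(m.ν x) = 1 := by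
      simp only [hwdef]
      rw [integral_add (integrable_const 1) hint3, integral_const_mul,
        integral_sub hgint (integrable_const c), integral_const, integral_const]
      simp [measure_univ, hcdef]
    rw [this, ENNReal.ofReal_one]
  meas F := by
    have key : (fun x => ∫ b, F.F b.1 ∂(P.perturb m n ε x))
        = fun x => (∫ b, F.F b.1 ∂(m.ν x))
          + ε * ((∫ b, (TestFun.mul P F (P.gTest n)).F b.1 ∂(m.ν x))
            - (∫ b' : P.Fib x, (P.gTest n).F b'.1 ∂(m.ν x)) * (∫ b, F.F b.1 ∂(m.ν x))) :=
      funext fun x => P.integral_perturb_eq m n ε hε x F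
    rw [key]
    exact (m.meas F).add ((((m.meas (TestFun.mul P F (P.gTest n))).sub
      ((m.meas (P.gTest n)).mul (m.meas F)))).const_mul ε)

set_option maxHeartbeats 1000000 in
lemma pairing_eq_of_dirac (μ : Measure X) [IsProbabilityMeasure μ]
    (m m₁ m₂ : P.MeasField) (a b : ℝ) (ha : 0 < a) (hb : 0 < b) (hab : a + b = 1)
    (hdir : ∀ᵐ x ∂μ, ∃ bb : P.Fib x, m.ν x = Measure.dirac bb)
    (E : ∀ F : P.TestFun, a * P.pairing μ m₁ F + b * P.pairing μ m₂ F = P.pairing μ m F)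
    (G : P.TestFun) : P.pairing μ m₁ G = P.pairing μ m G := by
  obtain ⟨M₀, hM₀⟩ := G.bdd
  set M : ℝ := max M₀ 0 with hMdef
  have hM : ∀ bb : B, |G.F bb| ≤ M := fun bb => (hM₀ bb).trans (le_max_left _ _)
  have hMnn : (0:ℝ) ≤ M := le_max_right _ _
  set c : X → ℝ := fun x => ∫ bb, G.F bb.1 ∂(m.ν x) with hcdef
  have hc_meas : Measurable c := m.meas G
  have hc_bd : ∀ x, |c x| ≤ M := P.fieldI_bound m G M hM
  set K : P.TestFun := TestFun.base P c hc_meas M hc_bd with hK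
  set G2 : P.TestFun := TestFun.mul P G G with hG2
  set GK : P.TestFun := TestFun.mul P G K with hGK
  have hGfib : ∀ x : X, Measurable (fun bb : P.Fib x => G.F bb.1) :=
    fun x => G.meas.comp measurable_subtype_coe
  set I1 : X → ℝ := fun x => ∫ bb, G.F bb.1 ∂(m₁.ν x) with hI1
  set I2 : X → ℝ := fun x => ∫ bb, G.F bb.1 ∂(m₂.ν x) with hI2
  set J1 : X → ℝ := fun x => ∫ bb, G.F bb.1 * G.F bb.1 ∂(m₁.ν x) with hJ1
  set J2 : X → ℝ := fun x => ∫ bb, G.F bb.1 * G.F bb.1 ∂(m₂.ν x) with hJ2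
  have hG2bd : ∀ bb : B, |G2.F bb| ≤ M * M := fun bb => by
    show |G.F bb * G.F bb| ≤ M * M
    rw [abs_mul]; exact mul_le_mul (hM bb) (hM bb) (abs_nonneg _) hMnn
  have hI1_bd : ∀ x, |I1 x| ≤ M := P.fieldI_bound m₁ G M hM
  have hI2_bd : ∀ x, |I2 x| ≤ M := P.fieldI_bound m₂ G M hM
  have hJ1_bd : ∀ x, |J1 x| ≤ M * M := P.fieldI_bound m₁ G2 (M*M) hG2bd
  have hJ2_bd : ∀ x, |J2 x| ≤ M * M := P.fieldI_bound m₂ G2 (M*M) hG2bd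
  have hI1_meas : Measurable I1 := m₁.meas G
  have hI2_meas : Measurable I2 := m₂.meas G
  have hJ1_meas : Measurable J1 := m₁.meas G2
  have hJ2_meas : Measurable J2 := m₂.meas G2
  have hIc_bd : ∀ (I : X → ℝ), (∀ x, |I x| ≤ M) → ∀ x, |I x * c x| ≤ M * M :=
    fun I hI x => by
      rw [abs_mul]; exact mul_le_mul (hI x) (hc_bd x) (abs_nonneg _) hMnn
  have hcc_bd : ∀ x, |c x * c x| ≤ M * M := hIc_bd c hc_bd
  have hint_J1 : Integrable J1 μ := integrable_of_bound' μ _ hJ1_meas _ hJ1_bd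
  have hint_J2 : Integrable J2 μ := integrable_of_bound' μ _ hJ2_meas _ hJ2_bd
  have hint_I1 : Integrable I1 μ := integrable_of_bound' μ _ hI1_meas _ hI1_bd
  have hint_I2 : Integrable I2 μ := integrable_of_bound' μ _ hI2_meas _ hI2_bd
  have hint_c : Integrable c μ := integrable_of_bound' μ _ hc_meas _ hc_bd
  have hint_Ic1 : Integrable (fun x => I1 x * c x) μ :=
    integrable_of_bound' μ _ (hI1_meas.mul hc_meas) _ (hIc_bd I1 hI1_bd)
  have hint_Ic2 : Integrable (fun x => I2 x * c x) μ :=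
    integrable_of_bound' μ _ (hI2_meas.mul hc_meas) _ (hIc_bd I2 hI2_bd)
  have hint_cc : Integrable (fun x => c x * c x) μ :=
    integrable_of_bound' μ _ (hc_meas.mul hc_meas) _ hcc_bd
  -- pairings expressed via integrals over the base
  have hpair1 : P.pairing μ m₁ G = ∫ x, I1 x ∂μ := rfl
  have hpairm : P.pairing μ m G = ∫ x, c x ∂μ := rfl
  have hpG2_1 : P.pairing μ m₁ G2 = ∫ x, J1 x ∂μ := rfl
  have hpG2_2 : P.pairing μ m₂ G2 = ∫ x, J2 x ∂μ := rfl
  have hpGK_1 : P.pairing μ m₁ GK = ∫ x, I1 x * c x ∂μ := by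
    show (∫ x, (∫ bb, GK.F bb.1 ∂(m₁.ν x)) ∂μ) = _
    congr 1
    funext x
    exact P.integral_mul_base m₁ G c hc_meas M hc_bd x
  have hpGK_2 : P.pairing μ m₂ GK = ∫ x, I2 x * c x ∂μ := by
    show (∫ x, (∫ bb, GK.F bb.1 ∂(m₂.ν x)) ∂μ) = _
    congr 1
    funext x
    exact P.integral_mul_base m₂ G c hc_meas M hc_bd x
  -- Dirac identities for m
  have hpG2_m : P.pairing μ m G2 = ∫ x, c x * c x ∂μ := by
    show (∫ x, (∫ bb, G2.F bb.1 ∂(m.ν x)) ∂μ) = _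
    refine integral_congr_ae ?_
    filter_upwards [hdir] with x hx
    obtain ⟨bb, hbb⟩ := hx
    have hsm : StronglyMeasurable (fun b : P.Fib x => G.F b.1) :=
      (hGfib x).stronglyMeasurable
    have hsm2 : StronglyMeasurable (fun b : P.Fib x => G2.F b.1) :=
      ((hGfib x).mul (hGfib x)).stronglyMeasurable
    have e1 : c x = G.F bb.1 := by
      simp only [hcdef]
      rw [hbb, integral_dirac' _ bb hsm]
    rw [hbb, integral_dirac' _ bb hsm2, e1]
    rfl
  have hpGK_m : P.pairing μ m GK = ∫ x, c x * c x ∂μ := by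
    show (∫ x, (∫ bb, GK.F bb.1 ∂(m.ν x)) ∂μ) = _
    congr 1
    funext x
    rw [P.integral_mul_base m G c hc_meas M hc_bd x]
  -- the convexity relations
  have E2 := E G2
  rw [hpG2_1, hpG2_2, hpG2_m] at E2
  have EK := E GK
  rw [hpGK_1, hpGK_2, hpGK_m] at EK
  -- nonnegative "variance" quantities
  have hA1pt : ∀ x, 0 ≤ J1 x - 2 * (I1 x * c x) + c x * c x := by
    intro x
    haveI := m₁.prob x
    have hexp := expand_mul (m₁.ν x) (fun bb => G.F bb.1) (hGfib x) M
      (fun bb => hM bb.1) (c x)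
    have h0 : 0 ≤ ∫ bb, (G.F bb.1 - c x) * (G.F bb.1 - c x) ∂(m₁.ν x) :=
      integral_nonneg fun bb => mul_self_nonneg _
    simp only [hJ1, hI1]
    linarith [hexp, h0]
  have hA2pt : ∀ x, 0 ≤ J2 x - 2 * (I2 x * c x) + c x * c x := by
    intro x
    haveI := m₂.prob x
    have hexp := expand_mul (m₂.ν x) (fun bb => G.F bb.1) (hGfib x) M
      (fun bb => hM bb.1) (c x)
    have h0 : 0 ≤ ∫ bb, (G.F bb.1 - c x) * (G.F bb.1 - c x) ∂(m₂.ν x) :=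
      integral_nonneg fun bb => mul_self_nonneg _
    simp only [hJ2, hI2]
    linarith [hexp, h0]
  have hS1 : Integrable (fun x => J1 x - 2 * (I1 x * c x)) μ :=
    hint_J1.sub (hint_Ic1.const_mul 2)
  have hS2 : Integrable (fun x => J2 x - 2 * (I2 x * c x)) μ :=
    hint_J2.sub (hint_Ic2.const_mul 2)
  have hintA1 : Integrable (fun x => J1 x - 2 * (I1 x * c x) + c x * c x) μ :=
    hS1.add hint_cc
  have hintA2 : Integrable (fun x => J2 x - 2 * (I2 x * c x) + c x * c x) μ :=
    hS2.add hint_cc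
  have hA1split : ∫ x, (J1 x - 2 * (I1 x * c x) + c x * c x) ∂μ
      = ∫ x, J1 x ∂μ - 2 * ∫ x, I1 x * c x ∂μ + ∫ x, c x * c x ∂μ := by
    rw [integral_add hS1 hint_cc, integral_sub hint_J1 (hint_Ic1.const_mul 2),
      integral_const_mul]
  have hA2split : ∫ x, (J2 x - 2 * (I2 x * c x) + c x * c x) ∂μ
      = ∫ x, J2 x ∂μ - 2 * ∫ x, I2 x * c x ∂μ + ∫ x, c x * c x ∂μ := by
    rw [integral_add hS2 hint_cc, integral_sub hint_J2 (hint_Ic2.const_mul 2),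
      integral_const_mul]
  have hA1nn : 0 ≤ ∫ x, (J1 x - 2 * (I1 x * c x) + c x * c x) ∂μ :=
    integral_nonneg hA1pt
  have hA2nn : 0 ≤ ∫ x, (J2 x - 2 * (I2 x * c x) + c x * c x) ∂μ :=
    integral_nonneg hA2pt
  have hsum0 : a * (∫ x, (J1 x - 2 * (I1 x * c x) + c x * c x) ∂μ)
      + b * (∫ x, (J2 x - 2 * (I2 x * c x) + c x * c x) ∂μ) = 0 := by
    rw [hA1split, hA2split]
    linear_combination E2 - 2 * EK + (∫ x, c x * c x ∂μ) * hab
  have hA1z : ∫ x, (J1 x - 2 * (I1 x * c x) + c x * c x) ∂μ = 0 := by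
    have h1 : 0 ≤ a * ∫ x, (J1 x - 2 * (I1 x * c x) + c x * c x) ∂μ :=
      mul_nonneg ha.le hA1nn
    have h2 : 0 ≤ b * ∫ x, (J2 x - 2 * (I2 x * c x) + c x * c x) ∂μ :=
      mul_nonneg hb.le hA2nn
    have h3 : a * ∫ x, (J1 x - 2 * (I1 x * c x) + c x * c x) ∂μ = 0 := by linarith
    rcases mul_eq_zero.mp h3 with h | h
    · exact absurd h (ne_of_gt ha)
    · exact h
  -- Cauchy-Schwarz on each fiber: (I1 x - c x)² ≤ variance integrand
  have hDpt : ∀ x, (I1 x - c x) * (I1 x - c x) ≤ J1 x - 2 * (I1 x * c x) + c x * c x := by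
    intro x
    haveI := m₁.prob x
    have hs := sq_integral_le' (m₁.ν x) (fun bb => G.F bb.1) (hGfib x) M (fun bb => hM bb.1)
    have hs' : I1 x * I1 x ≤ J1 x := hs
    have hexpand : (I1 x - c x) * (I1 x - c x)
        = I1 x * I1 x - 2 * (I1 x * c x) + c x * c x := by ring
    linarith [hs', hexpand]
  have hD_meas : Measurable (fun x => I1 x - c x) := hI1_meas.sub hc_meas
  have hD_bd : ∀ x, |I1 x - c x| ≤ M + M := fun x => by
    have h1 := abs_le.mp (hI1_bd x)
    have h2 := abs_le.mp (hc_bd x)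
    rw [abs_le]; constructor <;> linarith
  have hDD_int : Integrable (fun x => (I1 x - c x) * (I1 x - c x)) μ := by
    refine integrable_of_bound' μ _ (hD_meas.mul hD_meas) ((M+M)*(M+M)) fun x => ?_
    rw [abs_mul]
    exact mul_le_mul (hD_bd x) (hD_bd x) (abs_nonneg _) (by linarith)
  have hDD_le : ∫ x, (I1 x - c x) * (I1 x - c x) ∂μ ≤ 0 := by
    calc ∫ x, (I1 x - c x) * (I1 x - c x) ∂μ
        ≤ ∫ x, (J1 x - 2 * (I1 x * c x) + c x * c x) ∂μ :=
          integral_mono hDD_int hintA1 hDpt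
      _ = 0 := hA1z
  have hCS : (∫ x, (I1 x - c x) ∂μ) * (∫ x, (I1 x - c x) ∂μ)
      ≤ ∫ x, (I1 x - c x) * (I1 x - c x) ∂μ :=
    sq_integral_le' μ _ hD_meas (M + M) hD_bd
  have hz : ∫ x, (I1 x - c x) ∂μ = 0 :=
    mul_self_eq_zero.mp (le_antisymm (hCS.trans hDD_le) (mul_self_nonneg _))
  rw [integral_sub hint_I1 hint_c] at hz
  rw [hpair1, hpairm]
  linarith [hz]

set_option maxHeartbeats 1000000 in
lemma pairing_perturbField (μ : Measure X) [IsProbabilityMeasure μ] (m : P.MeasField)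
    (n : ℕ) (ε : ℝ) (hε : |ε| ≤ 1) (F : P.TestFun) :
    P.pairing μ (P.perturbField m n ε hε) F
      = P.pairing μ m F
        + ε * ((∫ x, (∫ bb, (TestFun.mul P F (P.gTest n)).F bb.1 ∂(m.ν x)) ∂μ)
          - ∫ x, (∫ bb' : P.Fib x, (P.gTest n).F bb'.1 ∂(m.ν x))
              * (∫ bb, F.F bb.1 ∂(m.ν x)) ∂μ) := by
  have key : (fun x => ∫ bb, F.F bb.1 ∂((P.perturbField m n ε hε).ν x))
      = fun x => (∫ bb, F.F bb.1 ∂(m.ν x))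
        + ε * ((∫ bb, (TestFun.mul P F (P.gTest n)).F bb.1 ∂(m.ν x))
          - (∫ bb' : P.Fib x, (P.gTest n).F bb'.1 ∂(m.ν x))
            * (∫ bb, F.F bb.1 ∂(m.ν x))) :=
    funext fun x => P.integral_perturb_eq m n ε hε x F
  show (∫ x, (∫ bb, F.F bb.1 ∂((P.perturbField m n ε hε).ν x)) ∂μ) = _
  rw [key]
  have hI := P.fieldI_integrable μ m F
  have hJ := P.fieldI_integrable μ m (TestFun.mul P F (P.gTest n))
  obtain ⟨MF, hMF⟩ := F.bdd
  have hcI : Integrable (fun x => (∫ bb' : P.Fib x, (P.gTest n).F bb'.1 ∂(m.ν x))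
      * (∫ bb, F.F bb.1 ∂(m.ν x))) μ := by
    refine integrable_of_bound' μ _ ((m.meas (P.gTest n)).mul (m.meas F))
      (1 * max MF 0) fun x => ?_
    rw [abs_mul]
    refine mul_le_mul (P.fieldI_bound m (P.gTest n) 1 (fun bb => by
        rw [abs_of_nonneg (P.gTest_nonneg n bb)]; exact P.gTest_le_one n bb) x)
      (P.fieldI_bound m F (max MF 0) (fun bb => (hMF bb).trans (le_max_left _ _)) x)
      (abs_nonneg _) zero_le_one
  have hsub : Integrable (fun x => (∫ bb, (TestFun.mul P F (P.gTest n)).F bb.1 ∂(m.ν x))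
      - (∫ bb' : P.Fib x, (P.gTest n).F bb'.1 ∂(m.ν x))
        * (∫ bb, F.F bb.1 ∂(m.ν x))) μ := hJ.sub hcI
  rw [integral_add hI (hsub.const_mul ε), integral_const_mul, integral_sub hJ hcI]
  rfl

end MetricBundle

end BundleHelpers

/-- for a separable metric bundle with compact fibers over a standard
probability space, a field of probability measures is an extreme point of `Prob(π)`
(viewed inside `C(π)*` via `Ψ`) if and only if almost every fiber measure is a Dirac
measure. -/
theorem probFields_extremePoint_iff_dirac
    {X : Type*} [MeasurableSpace X] [StandardBorelSpace X]
    {B : Type*} [MeasurableSpace B]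
    (μ : Measure X) [IsProbabilityMeasure μ]
    (P : MetricBundle X B) (hcomp : ∀ x : X, CompactSpace (P.Fib x))
    (m : P.MeasField) :
    P.fieldFunctional μ m ∈
        Set.extremePoints ℝ (Set.range (P.fieldFunctional μ)) ↔
      ∀ᵐ x ∂μ, ∃ b : P.Fib x, m.ν x = MeasureTheory.Measure.dirac b := by
  classical
  rw [mem_extremePoints]
  constructor
  · -- extreme point implies a.e. Dirac
    intro hext
    by_contra hae
    rw [ae_iff] at hae
    set V : ℕ → X → ℝ := fun n x =>
      (∫ bb, (P.gTest n).F bb.1 * (P.gTest n).F bb.1 ∂(m.ν x))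
        - (∫ bb, (P.gTest n).F bb.1 ∂(m.ν x)) * (∫ bb, (P.gTest n).F bb.1 ∂(m.ν x))
      with hV
    have hgfib : ∀ n (x : X), Measurable (fun bb : P.Fib x => (P.gTest n).F bb.1) :=
      fun n x => (P.gTest n).meas.comp measurable_subtype_coe
    have hgbd : ∀ n (bb : B), |(P.gTest n).F bb| ≤ 1 := fun n bb => by
      rw [abs_of_nonneg (P.gTest_nonneg n bb)]; exact P.gTest_le_one n bb
    have hVnn : ∀ n x, 0 ≤ V n x := by
      intro n x
      haveI := m.prob x
      have hs := sq_integral_le' (m.ν x) (fun bb => (P.gTest n).F bb.1) (hgfib n x) 1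
        (fun bb => hgbd n bb.1)
      simp only [hV]
      linarith
    have hVmeas : ∀ n, Measurable (V n) := by
      intro n
      have h1 : Measurable (fun x =>
          ∫ bb, (MetricBundle.TestFun.mul P (P.gTest n) (P.gTest n)).F bb.1 ∂(m.ν x)) :=
        m.meas _
      have h2 := m.meas (P.gTest n)
      exact h1.sub (h2.mul h2)
    have hsub : {x | ¬ ∃ b : P.Fib x, m.ν x = MeasureTheory.Measure.dirac b}
        ⊆ ⋃ n, {x | V n x ≠ 0} := by
      intro x hx
      by_contra hxU
      simp only [Set.mem_iUnion, Set.mem_setOf_eq, not_exists, not_not] at hxU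
      haveI := m.prob x
      refine hx ?_
      refine P.dirac_of_var_zero x (m.ν x) fun n => ?_
      have := hxU n
      simp only [hV] at this
      linarith
    have hU : μ (⋃ n, {x | V n x ≠ 0}) ≠ 0 := fun h0 => hae (measure_mono_null hsub h0)
    have hexn : ∃ n, μ {x | V n x ≠ 0} ≠ 0 := by
      by_contra hno
      push_neg at hno
      exact hU (measure_iUnion_null fun n => hno n)
    obtain ⟨n, hn⟩ := hexn
    have hVbd : ∀ x, |V n x| ≤ 2 := by
      intro x
      have h1 : |∫ bb, (P.gTest n).F bb.1 * (P.gTest n).F bb.1 ∂(m.ν x)| ≤ 1 := by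
        have := P.fieldI_bound m (MetricBundle.TestFun.mul P (P.gTest n) (P.gTest n)) 1
          (fun bb => by
            show |(P.gTest n).F bb * (P.gTest n).F bb| ≤ 1
            rw [abs_mul]
            simpa using mul_le_mul (hgbd n bb) (hgbd n bb) (abs_nonneg _) zero_le_one) x
        exact this
      have h2 : |∫ bb, (P.gTest n).F bb.1 ∂(m.ν x)| ≤ 1 := P.fieldI_bound m (P.gTest n) 1
        (fun bb => hgbd n bb) x
      have h3 : |(∫ bb, (P.gTest n).F bb.1 ∂(m.ν x)) * ∫ bb, (P.gTest n).F bb.1 ∂(m.ν x)| ≤ 1 := by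
        rw [abs_mul]
        simpa using mul_le_mul h2 h2 (abs_nonneg _) zero_le_one
      have h1' := abs_le.mp h1
      have h3' := abs_le.mp h3
      simp only [hV]
      rw [abs_le]
      constructor <;> [linarith [h1'.1, h3'.2]; linarith [h1'.2, h3'.1]]
    have hVint : Integrable (V n) μ := integrable_of_bound' μ _ (hVmeas n) 2 hVbd
    have hVpos : 0 < ∫ x, V n x ∂μ := by
      refine (integral_pos_iff_support_of_nonneg (fun x => hVnn n x) hVint).mpr ?_
      have hss : Function.support (V n) = {x | V n x ≠ 0} := rfl
      rw [hss]
      exact zero_lt_iff.mpr hn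
    have hq : |(1/4 : ℝ)| ≤ 1 := by rw [abs_of_nonneg] <;> norm_num
    have hq' : |(-(1/4) : ℝ)| ≤ 1 := by rw [abs_neg, abs_of_nonneg] <;> norm_num
    set m₁ := P.perturbField m n (1/4) hq with hm₁
    set m₂ := P.perturbField m n (-(1/4)) hq' with hm₂
    -- pairing formulas
    have hp1 := P.pairing_perturbField μ m n (1/4) hq
    have hp2 := P.pairing_perturbField μ m n (-(1/4)) hq'
    have hseg : P.fieldFunctional μ m ∈ openSegment ℝ
        (P.fieldFunctional μ m₁) (P.fieldFunctional μ m₂) := by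
      refine ⟨1/2, 1/2, by norm_num, by norm_num, by norm_num, ?_⟩
      funext F
      show (1/2 : ℝ) * P.pairing μ m₁ F + (1/2 : ℝ) * P.pairing μ m₂ F = P.pairing μ m F
      rw [hm₁, hm₂, hp1 F, hp2 F]
      ring
    have hres := hext.2 (P.fieldFunctional μ m₁) (Set.mem_range_self m₁)
      (P.fieldFunctional μ m₂) (Set.mem_range_self m₂) hseg
    have h12 : P.fieldFunctional μ m₁ = P.fieldFunctional μ m₂ :=
      hres.1.trans hres.2.symm
    have heval : P.pairing μ m₁ (P.gTest n) = P.pairing μ m₂ (P.gTest n) :=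
      congrFun h12 (P.gTest n)
    rw [hm₁, hm₂, hp1 (P.gTest n), hp2 (P.gTest n)] at heval
    -- identify the difference with ∫ V n
    have hJint := P.fieldI_integrable μ m
      (MetricBundle.TestFun.mul P (P.gTest n) (P.gTest n))
    have hcIint : Integrable (fun x => (∫ bb' : P.Fib x, (P.gTest n).F bb'.1 ∂(m.ν x))
        * (∫ bb, (P.gTest n).F bb.1 ∂(m.ν x))) μ := by
      refine integrable_of_bound' μ _ ((m.meas (P.gTest n)).mul (m.meas (P.gTest n))) 1
        fun x => ?_
      rw [abs_mul]
      simpa using mul_le_mul (P.fieldI_bound m (P.gTest n) 1 (fun bb => hgbd n bb) x)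
        (P.fieldI_bound m (P.gTest n) 1 (fun bb => hgbd n bb) x) (abs_nonneg _) zero_le_one
    have hQ : (∫ x, (∫ bb, (MetricBundle.TestFun.mul P (P.gTest n) (P.gTest n)).F bb.1
          ∂(m.ν x)) ∂μ)
        - (∫ x, (∫ bb' : P.Fib x, (P.gTest n).F bb'.1 ∂(m.ν x))
            * (∫ bb, (P.gTest n).F bb.1 ∂(m.ν x)) ∂μ)
        = ∫ x, V n x ∂μ := by
      rw [← integral_sub hJint hcIint]
      rfl
    linarith [hVpos, heval, hQ]
  · -- a.e. Dirac implies extreme point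
    intro hdir
    refine ⟨Set.mem_range_self m, ?_⟩
    intro f₁ hf₁ f₂ hf₂ hseg
    obtain ⟨m₁, rfl⟩ := hf₁
    obtain ⟨m₂, rfl⟩ := hf₂
    obtain ⟨a, b, ha, hb, hab, hsum⟩ := hseg
    have E : ∀ F : P.TestFun, a * P.pairing μ m₁ F + b * P.pairing μ m₂ F
        = P.pairing μ m F := by
      intro F
      have := congrFun hsum F
      simpa [MetricBundle.fieldFunctional, Pi.add_apply, Pi.smul_apply, smul_eq_mul]
        using this
    have E' : ∀ F : P.TestFun, b * P.pairing μ m₂ F + a * P.pairing μ m₁ F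
        = P.pairing μ m F := fun F => by linarith [E F]
    constructor
    · funext F
      exact P.pairing_eq_of_dirac μ m m₁ m₂ a b ha hb hab hdir E F
    · funext F
      exact P.pairing_eq_of_dirac μ m m₂ m₁ b a hb ha (by linarith) hdir E' F
end
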